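/- For every finitely generated kC_p-module M, ppdim(M) = size(M). -/

import Mathlib

open Polynomial

noncomputable section

/-- `Mmod k i` is the `k[T]`-module `M_i = k[T]/(T^i)`. -/
abbrev Mmod (k : Type) [Field k] (i : ℕ) : Type :=
  Polynomial k ⧸ Ideal.span {(X : Polynomial k) ^ i}

/-- A permutation `kC_p`-module: a direct sum of copies of `kC_p = k[T]/T^p`
and the trivial module `k = k[T]/T`. -/
def IsPermMod (k : Type) [Field k] (p : ℕ) (M : Type) [AddCommGroup M]
    [Module (Polynomial k) M] : Prop :=
  ∃ r s : ℕ,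
    Nonempty (M ≃ₗ[Polynomial k] ((Fin r → Mmod k p) × (Fin s → Mmod k 1)))

/-- `m` has depth `i`: `m ∈ T^i M` but `m ∉ T^{i+1} M`. -/
def HasDepth (k : Type) [Field k] {M : Type} [AddCommGroup M] [Module (Polynomial k) M]
    (i : ℕ) (m : M) : Prop :=
  (∃ y : M, m = (X : Polynomial k) ^ i • y) ∧ ¬ ∃ y : M, m = (X : Polynomial k) ^ (i + 1) • y

/-- `α` is the nilpotency index of `m` with respect to `T`. -/
def IsIndex (k : Type) [Field k] {M : Type} [AddCommGroup M] [Module (Polynomial k) M]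
    (α : ℕ) (m : M) : Prop :=
  (X : Polynomial k) ^ α • m = 0 ∧ ∀ β < α, (X : Polynomial k) ^ β • m ≠ 0

/-- `M` admits a resolution `0 → P_s → ⋯ → P_0 → M → 0` by permutation `kC_p`-modules. -/
def HasPermRes (k : Type) [Field k] (p : ℕ) :
    (s : ℕ) → (M : Type) → [AddCommGroup M] → [Module (Polynomial k) M] → Prop
  | 0, M, _, _ => IsPermMod k p M
  | (s + 1), M, _, _ =>
      ∃ (P : Type) (_ : AddCommGroup P) (_ : Module (Polynomial k) P)
        (f : P →ₗ[Polynomial k] M), IsPermMod k p P ∧ Function.Surjective f ∧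
          HasPermRes k p s (LinearMap.ker f)

/-- The `p`-permutation dimension of `M`: minimal length of a permutation resolution. -/
def ppdim (k : Type) [Field k] (p : ℕ) (M : Type) [AddCommGroup M]
    [Module (Polynomial k) M] : ℕ :=
  sInf {s | HasPermRes k p s M}

/-- The `p`-distance function: `f 1 = f p = 0` and
`f x = min (f (p-x)) (f (p-x+1)) + 1` for `2 ≤ x ≤ p-1`. -/
def IsSizeFun (p : ℕ) (f : ℕ → ℕ) : Prop :=
  f 1 = 0 ∧ f p = 0 ∧ ∀ x, 2 ≤ x → x ≤ p - 1 → f x = min (f (p - x)) (f (p - x + 1)) + 1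

namespace Stmt14Aux

variable {k : Type} [Field k]

lemma smul_mk (a : ℕ) (r g : Polynomial k) :
    r • (Submodule.Quotient.mk g : Mmod k a) = Submodule.Quotient.mk (r * g) := by
  rw [← Submodule.Quotient.mk_smul, smul_eq_mul]

lemma mk_eq_zero' (a : ℕ) (g : Polynomial k) :
    (Submodule.Quotient.mk g : Mmod k a) = 0 ↔ (X : Polynomial k) ^ a ∣ g := by
  rw [Submodule.Quotient.mk_eq_zero, Ideal.mem_span_singleton]

lemma pow_dvd_pow_iff_le {m n : ℕ} : (X : Polynomial k) ^ m ∣ X ^ n ↔ m ≤ n :=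
  pow_dvd_pow_iff X_ne_zero not_isUnit_X

/-- X^b kills Mmod k a when a ≤ b -/
lemma mmod_ann (a b : ℕ) (h : a ≤ b) (y : Mmod k a) : (X : Polynomial k) ^ b • y = 0 := by
  obtain ⟨g, rfl⟩ := Submodule.Quotient.mk_surjective _ y
  rw [smul_mk, mk_eq_zero']
  exact Dvd.dvd.mul_right (pow_dvd_pow X h) g

lemma mmod_exists (a t : ℕ) (h : t ≤ a) (y : Mmod k a)
    (hy : (X : Polynomial k) ^ t • y = 0) :
    ∃ v : Mmod k a, y = (X : Polynomial k) ^ (a - t) • v := by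
  obtain ⟨g, rfl⟩ := Submodule.Quotient.mk_surjective _ y
  rw [smul_mk, mk_eq_zero'] at hy
  obtain ⟨h', hh'⟩ := hy
  have hXt : (X : Polynomial k) ^ t ≠ 0 := pow_ne_zero _ X_ne_zero
  have hg : g = X ^ (a - t) * h' := by
    apply mul_left_cancel₀ hXt
    rw [hh', ← mul_assoc, ← pow_add]
    congr 2
    omega
  exact ⟨Submodule.Quotient.mk h', by rw [smul_mk, hg]⟩

lemma mmod_ne (a : ℕ) (ha : 1 ≤ a) :
    ¬ ∃ z : Mmod k a, (X : Polynomial k) ^ (a - 1) • (Submodule.Quotient.mk 1 : Mmod k a)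
      = (X : Polynomial k) ^ a • z := by
  rintro ⟨z, hz⟩
  obtain ⟨h, rfl⟩ := Submodule.Quotient.mk_surjective _ z
  rw [smul_mk, smul_mk, Submodule.Quotient.eq] at hz
  rw [Ideal.mem_span_singleton] at hz
  have hdvd : (X : Polynomial k) ^ a ∣ X ^ (a - 1) := by
    have h2 : (X : Polynomial k) ^ a ∣ X ^ a * h := Dvd.intro _ rfl
    have h3 := dvd_add hz h2
    simpa using h3
  have := pow_dvd_pow_iff_le.1 hdvd
  omega


end Stmt14Aux

namespace Stmt14Aux

variable {k : Type} [Field k] {p : ℕ}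

lemma hasPermRes_zero_iff (M : Type) [AddCommGroup M] [Module (Polynomial k) M] :
    HasPermRes k p 0 M ↔ IsPermMod k p M := Iff.rfl

lemma hasPermRes_succ_iff (s : ℕ) (M : Type) [AddCommGroup M] [Module (Polynomial k) M] :
    HasPermRes k p (s + 1) M ↔
      ∃ (P : Type) (_ : AddCommGroup P) (_ : Module (Polynomial k) P)
        (f : P →ₗ[Polynomial k] M), IsPermMod k p P ∧ Function.Surjective f ∧
          HasPermRes k p s (LinearMap.ker f) := Iff.rfl

/-- linear equivalence between subsingleton modules -/
def subsingletonLEquiv (A B : Type) [AddCommGroup A] [Module (Polynomial k) A]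
    [AddCommGroup B] [Module (Polynomial k) B] [Subsingleton A] [Subsingleton B] :
    A ≃ₗ[Polynomial k] B where
  toFun _ := 0
  invFun _ := 0
  map_add' _ _ := Subsingleton.elim _ _
  map_smul' _ _ := Subsingleton.elim _ _
  left_inv _ := Subsingleton.elim _ _
  right_inv _ := Subsingleton.elim _ _

def prodSubLEquiv {A B : Type} [AddCommGroup A] [Module (Polynomial k) A]
    [AddCommGroup B] [Module (Polynomial k) B]
    (q : Submodule (Polynomial k) A) (q' : Submodule (Polynomial k) B) :
    ↥(q.prod q') ≃ₗ[Polynomial k] (↥q × ↥q') where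
  toFun x := (⟨x.1.1, x.2.1⟩, ⟨x.1.2, x.2.2⟩)
  invFun y := ⟨(y.1.1, y.2.1), ⟨y.1.2, y.2.2⟩⟩
  map_add' _ _ := rfl
  map_smul' _ _ := rfl
  left_inv _ := rfl
  right_inv _ := rfl

def piSuccLEquiv {n : ℕ} (φ : Fin (n + 1) → Type) [∀ i, AddCommGroup (φ i)]
    [∀ i, Module (Polynomial k) (φ i)] :
    (∀ i, φ i) ≃ₗ[Polynomial k] (φ 0 × ∀ i : Fin n, φ i.succ) where
  toFun g := (g 0, fun i => g i.succ)
  invFun y := Fin.cons y.1 y.2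
  map_add' _ _ := rfl
  map_smul' _ _ := rfl
  left_inv g := Fin.cons_self_tail g
  right_inv y := by
    refine Prod.ext ?_ ?_
    · simp
    · funext i; simp

def prodSubsingletonRight (A T : Type) [AddCommGroup A] [Module (Polynomial k) A]
    [AddCommGroup T] [Module (Polynomial k) T] [Subsingleton T] :
    A ≃ₗ[Polynomial k] (A × T) where
  toFun a := (a, 0)
  invFun y := y.1
  map_add' _ _ := by simp
  map_smul' _ _ := by simp
  left_inv _ := rfl
  right_inv y := by
    refine Prod.ext rfl ?_
    exact Subsingleton.elim _ _

def prodSubsingletonLeft (A T : Type) [AddCommGroup A] [Module (Polynomial k) A]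
    [AddCommGroup T] [Module (Polynomial k) T] [Subsingleton T] :
    A ≃ₗ[Polynomial k] (T × A) where
  toFun a := (0, a)
  invFun y := y.2
  map_add' _ _ := by simp
  map_smul' _ _ := by simp
  left_inv _ := rfl
  right_inv y := by
    refine Prod.ext ?_ rfl
    exact Subsingleton.elim _ _

lemma isPermMod_congr {A B : Type} [AddCommGroup A] [Module (Polynomial k) A]
    [AddCommGroup B] [Module (Polynomial k) B] (e : A ≃ₗ[Polynomial k] B)
    (h : IsPermMod k p A) : IsPermMod k p B := by
  obtain ⟨r, s, ⟨g⟩⟩ := h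
  exact ⟨r, s, ⟨e.symm.trans g⟩⟩

lemma isPermMod_of_subsingleton (A : Type) [AddCommGroup A] [Module (Polynomial k) A]
    [Subsingleton A] : IsPermMod k p A :=
  ⟨0, 0, ⟨subsingletonLEquiv _ _⟩⟩

/-- merging two permutation modules -/
def permMerge (r₁ s₁ r₂ s₂ : ℕ) :
    (((Fin r₁ → Mmod k p) × (Fin s₁ → Mmod k 1)) × ((Fin r₂ → Mmod k p) × (Fin s₂ → Mmod k 1)))
      ≃ₗ[Polynomial k] ((Fin (r₁ + r₂) → Mmod k p) × (Fin (s₁ + s₂) → Mmod k 1)) :=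
  (LinearEquiv.prodProdProdComm (Polynomial k) _ _ _ _).trans
    (LinearEquiv.prodCongr
      (((LinearEquiv.sumArrowLequivProdArrow _ _ (Polynomial k) _).symm).trans
        (LinearEquiv.funCongrLeft (Polynomial k) _ finSumFinEquiv.symm))
      (((LinearEquiv.sumArrowLequivProdArrow _ _ (Polynomial k) _).symm).trans
        (LinearEquiv.funCongrLeft (Polynomial k) _ finSumFinEquiv.symm)))

lemma isPermMod_prod {A B : Type} [AddCommGroup A] [Module (Polynomial k) A]
    [AddCommGroup B] [Module (Polynomial k) B]
    (hA : IsPermMod k p A) (hB : IsPermMod k p B) : IsPermMod k p (A × B) := by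
  obtain ⟨r₁, s₁, ⟨gA⟩⟩ := hA
  obtain ⟨r₂, s₂, ⟨gB⟩⟩ := hB
  exact ⟨r₁ + r₂, s₁ + s₂, ⟨(gA.prodCongr gB).trans (permMerge r₁ s₁ r₂ s₂)⟩⟩

end Stmt14Aux

namespace Stmt14Aux

variable {k : Type} [Field k] {p : ℕ}

lemma hasPermRes_congr : ∀ (s : ℕ) (A B : Type) [AddCommGroup A] [Module (Polynomial k) A]
    [AddCommGroup B] [Module (Polynomial k) B],
    (A ≃ₗ[Polynomial k] B) → HasPermRes k p s A → HasPermRes k p s B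
  | 0, A, B, _, _, _, _, e, h => isPermMod_congr e h
  | (s + 1), A, B, _, _, _, _, e, h => by
    obtain ⟨P, iP1, iP2, g, hperm, hsurj, hres⟩ := h
    refine ⟨P, iP1, iP2, e.toLinearMap.comp g, hperm, ?_, ?_⟩
    · intro b
      obtain ⟨a, ha⟩ := hsurj (e.symm b)
      exact ⟨a, by simp [ha]⟩
    · have hk : LinearMap.ker (e.toLinearMap.comp g) = LinearMap.ker g := by
        rw [LinearMap.ker_comp, LinearEquiv.ker, Submodule.comap_bot]
      rw [hk]
      exact hres

lemma subsingleton_ker_id {A : Type} [AddCommGroup A] [Module (Polynomial k) A] :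
    Subsingleton ↥(LinearMap.ker (LinearMap.id : A →ₗ[Polynomial k] A)) := by
  constructor
  rintro ⟨x, hx⟩ ⟨y, hy⟩
  rw [LinearMap.mem_ker] at hx hy
  simp only [LinearMap.id_apply] at hx hy
  exact Subtype.ext (hx.trans hy.symm)

lemma hasPermRes_succ : ∀ (s : ℕ) (A : Type) [AddCommGroup A] [Module (Polynomial k) A],
    HasPermRes k p s A → HasPermRes k p (s + 1) A
  | 0, A, _, _, h => by
    refine ⟨A, ‹_›, ‹_›, LinearMap.id, (hasPermRes_zero_iff A).mp h, Function.surjective_id, ?_⟩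
    have := subsingleton_ker_id (k := k) (A := A)
    exact isPermMod_of_subsingleton _
  | (s + 1), A, _, _, h => by
    obtain ⟨P, iP1, iP2, g, hperm, hsurj, hres⟩ := h
    exact ⟨P, iP1, iP2, g, hperm, hsurj, hasPermRes_succ s _ hres⟩

lemma hasPermRes_mono {s s' : ℕ} (h : s ≤ s') (A : Type) [AddCommGroup A]
    [Module (Polynomial k) A] (hA : HasPermRes k p s A) : HasPermRes k p s' A := by
  induction s', (h : s ≤ s') using Nat.le_induction with
  | base => exact hA
  | succ n hn ih => exact hasPermRes_succ n A ih

lemma hasPermRes_prod : ∀ (s : ℕ) (A B : Type) [AddCommGroup A] [Module (Polynomial k) A]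
    [AddCommGroup B] [Module (Polynomial k) B],
    HasPermRes k p s A → HasPermRes k p s B → HasPermRes k p s (A × B)
  | 0, A, B, _, _, _, _, hA, hB => isPermMod_prod hA hB
  | (s + 1), A, B, _, _, _, _, hA, hB => by
    obtain ⟨PA, iA1, iA2, gA, hpermA, hsurjA, hresA⟩ := hA
    obtain ⟨PB, iB1, iB2, gB, hpermB, hsurjB, hresB⟩ := hB
    refine ⟨PA × PB, inferInstance, inferInstance, gA.prodMap gB, isPermMod_prod hpermA hpermB,
      ?_, ?_⟩
    · rintro ⟨a, b⟩
      obtain ⟨xa, ha⟩ := hsurjA a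
      obtain ⟨xb, hb⟩ := hsurjB b
      exact ⟨(xa, xb), by simp [LinearMap.prodMap_apply, ha, hb]⟩
    · rw [LinearMap.ker_prodMap]
      exact hasPermRes_congr s _ _ (prodSubLEquiv _ _).symm
        (hasPermRes_prod s _ _ hresA hresB)

lemma hasPermRes_pi (s : ℕ) : ∀ (n : ℕ) (φ : Fin n → Type) [∀ i, AddCommGroup (φ i)]
    [∀ i, Module (Polynomial k) (φ i)],
    (∀ i, HasPermRes k p s (φ i)) → HasPermRes k p s (∀ i, φ i) := by
  intro n
  induction n with
  | zero =>
    intro φ _ _ _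
    exact hasPermRes_mono (Nat.zero_le s) _ (isPermMod_of_subsingleton _)
  | succ n ih =>
    intro φ _ _ hφ
    exact hasPermRes_congr s _ _ (piSuccLEquiv φ).symm
      (hasPermRes_prod s _ _ (hφ 0) (ih _ (fun i => hφ i.succ)))

end Stmt14Aux

namespace Stmt14Aux

variable {k : Type} [Field k]

def projQ (a b : ℕ) (h : b ≤ a) : Mmod k a →ₗ[Polynomial k] Mmod k b :=
  Submodule.mapQ _ _ LinearMap.id (by
    rw [Submodule.comap_id, Ideal.span_le, Set.singleton_subset_iff]
    exact Ideal.mem_span_singleton.mpr (pow_dvd_pow X h))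

@[simp] lemma projQ_mk (a b : ℕ) (h : b ≤ a) (g : Polynomial k) :
    projQ a b h (Submodule.Quotient.mk g) = Submodule.Quotient.mk g :=
  Submodule.mapQ_apply _ _ _ g

lemma projQ_surjective (a b : ℕ) (h : b ≤ a) : Function.Surjective (projQ (k := k) a b h) := by
  intro y
  obtain ⟨g, rfl⟩ := Submodule.Quotient.mk_surjective _ y
  exact ⟨Submodule.Quotient.mk g, projQ_mk a b h g⟩

def kerProjAux (a b : ℕ) : Polynomial k →ₗ[Polynomial k] Mmod k a :=
  (X : Polynomial k) ^ b • (Ideal.span {(X : Polynomial k) ^ a}).mkQ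

lemma kerProjAux_apply (a b : ℕ) (g : Polynomial k) :
    kerProjAux a b g = (Submodule.Quotient.mk ((X : Polynomial k) ^ b * g) : Mmod k a) := by
  simp only [kerProjAux, LinearMap.smul_apply, Submodule.mkQ_apply, smul_mk]

lemma kerProjAux_mem (a b : ℕ) (h : b ≤ a) (g : Polynomial k) :
    kerProjAux a b g ∈ LinearMap.ker (projQ (k := k) a b h) := by
  rw [LinearMap.mem_ker, kerProjAux_apply, projQ_mk, mk_eq_zero']
  exact Dvd.dvd.mul_right (dvd_refl _) g

def kerProjRes (a b : ℕ) (h : b ≤ a) :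
    Polynomial k →ₗ[Polynomial k] ↥(LinearMap.ker (projQ (k := k) a b h)) :=
  LinearMap.codRestrict _ (kerProjAux a b) (kerProjAux_mem a b h)

lemma kerProjRes_surjective (a b : ℕ) (h : b ≤ a) :
    Function.Surjective (kerProjRes (k := k) a b h) := by
  rintro ⟨y, hy⟩
  obtain ⟨g, rfl⟩ := Submodule.Quotient.mk_surjective _ y
  rw [LinearMap.mem_ker, projQ_mk, mk_eq_zero'] at hy
  obtain ⟨g', rfl⟩ := hy
  exact ⟨g', Subtype.ext (kerProjAux_apply a b g')⟩

lemma kerProjRes_ker (a b : ℕ) (h : b ≤ a) :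
    LinearMap.ker (kerProjRes (k := k) a b h) = Ideal.span {(X : Polynomial k) ^ (a - b)} := by
  ext g
  rw [kerProjRes, LinearMap.ker_codRestrict]
  rw [LinearMap.mem_ker, kerProjAux_apply, mk_eq_zero', Ideal.mem_span_singleton]
  have hpow : (X : Polynomial k) ^ a = X ^ b * X ^ (a - b) := by
    rw [← pow_add]; congr 1; omega
  rw [hpow, mul_dvd_mul_iff_left (pow_ne_zero b (X_ne_zero (R := k)))]

def kerProjEquiv (a b : ℕ) (h : b ≤ a) :
    Mmod k (a - b) ≃ₗ[Polynomial k] ↥(LinearMap.ker (projQ (k := k) a b h)) :=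
  (Submodule.quotEquivOfEq _ _ (kerProjRes_ker a b h).symm).trans
    (LinearMap.quotKerEquivOfSurjective _ (kerProjRes_surjective a b h))

section SecondRes

variable (c : ℕ) (hc1 : 1 ≤ c)

def tauQ : Mmod k 1 →ₗ[Polynomial k] Mmod k c :=
  Submodule.liftQ _ ((X : Polynomial k) ^ (c - 1) • (Ideal.span {(X : Polynomial k) ^ c}).mkQ)
    (by
      rw [Ideal.span_le, Set.singleton_subset_iff]
      rw [SetLike.mem_coe, LinearMap.mem_ker, LinearMap.smul_apply, Submodule.mkQ_apply, smul_mk,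
        mk_eq_zero']
      rw [pow_one, ← pow_succ]
      exact pow_dvd_pow X (by omega))

lemma tauQ_mk (g : Polynomial k) :
    tauQ c hc1 (Submodule.Quotient.mk g) =
      (Submodule.Quotient.mk ((X : Polynomial k) ^ (c - 1) * g) : Mmod k c) := by
  simp only [tauQ, Submodule.liftQ_apply, LinearMap.smul_apply, Submodule.mkQ_apply, smul_mk]

variable {p : ℕ} (hcp : c ≤ p)

def Fmap : (Mmod k p × Mmod k 1) →ₗ[Polynomial k] Mmod k c :=
  (projQ p c hcp).comp (LinearMap.fst _ _ _) + (tauQ c hc1).comp (LinearMap.snd _ _ _)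

lemma Fmap_apply (y : Mmod k p × Mmod k 1) :
    Fmap c hc1 hcp y = projQ p c hcp y.1 + tauQ c hc1 y.2 := rfl

lemma Fmap_surjective : Function.Surjective (Fmap (k := k) c hc1 hcp) := by
  intro y
  obtain ⟨g, rfl⟩ := Submodule.Quotient.mk_surjective _ y
  refine ⟨(Submodule.Quotient.mk g, 0), ?_⟩
  rw [Fmap_apply, map_zero, add_zero, projQ_mk]

def psi2 : Polynomial k →ₗ[Polynomial k] (Mmod k p × Mmod k 1) :=
  LinearMap.prod ((X : Polynomial k) ^ (c - 1) • (Ideal.span {(X : Polynomial k) ^ p}).mkQ)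
    (-(Ideal.span {(X : Polynomial k) ^ 1}).mkQ)

lemma psi2_apply (g : Polynomial k) :
    psi2 (k := k) (p := p) c g =
      ((Submodule.Quotient.mk ((X : Polynomial k) ^ (c - 1) * g) : Mmod k p),
        -(Submodule.Quotient.mk g : Mmod k 1)) := by
  simp only [psi2, LinearMap.prod_apply, Function.prod_apply, LinearMap.smul_apply, LinearMap.neg_apply,
    Submodule.mkQ_apply, smul_mk]

lemma psi2_mem (g : Polynomial k) :
    psi2 (k := k) c g ∈ LinearMap.ker (Fmap c hc1 hcp) := by
  rw [LinearMap.mem_ker, psi2_apply, Fmap_apply]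
  simp only [map_neg, tauQ_mk, projQ_mk]
  rw [add_neg_eq_zero]

def psi2Res : Polynomial k →ₗ[Polynomial k] ↥(LinearMap.ker (Fmap (k := k) c hc1 hcp)) :=
  LinearMap.codRestrict _ (psi2 c) (psi2_mem c hc1 hcp)

lemma psi2Res_surjective : Function.Surjective (psi2Res (k := k) c hc1 hcp) := by
  rintro ⟨⟨y1, y2⟩, hy⟩
  obtain ⟨g₀, rfl⟩ := Submodule.Quotient.mk_surjective _ y1
  obtain ⟨g₁, rfl⟩ := Submodule.Quotient.mk_surjective _ y2
  rw [LinearMap.mem_ker, Fmap_apply] at hy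
  simp only [projQ_mk, tauQ_mk] at hy
  rw [← Submodule.Quotient.mk_add, mk_eq_zero'] at hy
  obtain ⟨h, hh⟩ := hy
  refine ⟨-g₁ + X * h, Subtype.ext ?_⟩
  rw [psi2Res, LinearMap.codRestrict_apply, psi2_apply]
  have hc' : (X : Polynomial k) ^ c = X ^ (c - 1) * X := by
    rw [← pow_succ]; congr 1; omega
  rw [hc'] at hh
  refine Prod.ext ?_ ?_
  · show (Submodule.Quotient.mk ((X : Polynomial k) ^ (c-1) * (-g₁ + X * h)) : Mmod k p) = _
    congr 1
    linear_combination -hh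
  · show -(Submodule.Quotient.mk (-g₁ + X * h) : Mmod k 1) = _
    rw [← Submodule.Quotient.mk_neg]
    rw [Submodule.Quotient.eq]
    rw [Ideal.mem_span_singleton, pow_one]
    ring_nf
    exact Dvd.dvd.neg_right (Dvd.dvd.mul_right (dvd_refl X) h)

lemma psi2Res_ker :
    LinearMap.ker (psi2Res (k := k) c hc1 hcp) =
      Ideal.span {(X : Polynomial k) ^ (p - c + 1)} := by
  ext g
  rw [psi2Res, LinearMap.ker_codRestrict, LinearMap.mem_ker, psi2_apply,
    Ideal.mem_span_singleton, Prod.mk_eq_zero, neg_eq_zero, mk_eq_zero', mk_eq_zero']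
  have hpow : (X : Polynomial k) ^ p = X ^ (c - 1) * X ^ (p - c + 1) := by
    rw [← pow_add]; congr 1; omega
  constructor
  · rintro ⟨h1, -⟩
    rw [hpow, mul_dvd_mul_iff_left (pow_ne_zero _ (X_ne_zero (R := k)))] at h1
    exact h1
  · intro hdvd
    constructor
    · rw [hpow]
      exact mul_dvd_mul_left _ hdvd
    · exact dvd_trans (by rw [pow_one]; exact dvd_pow_self X (by omega)) hdvd

def kerFEquiv :
    Mmod k (p - c + 1) ≃ₗ[Polynomial k] ↥(LinearMap.ker (Fmap (k := k) c hc1 hcp)) :=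
  (Submodule.quotEquivOfEq _ _ (psi2Res_ker c hc1 hcp).symm).trans
    (LinearMap.quotKerEquivOfSurjective _ (psi2Res_surjective c hc1 hcp))

end SecondRes

variable {p : ℕ}

lemma isPermMod_mmod_p : IsPermMod k p (Mmod k p) :=
  ⟨1, 0, ⟨((LinearEquiv.funUnique (Fin 1) (Polynomial k) (Mmod k p)).symm).trans
    (prodSubsingletonRight _ _)⟩⟩

lemma isPermMod_mmod_one : IsPermMod k p (Mmod k 1) :=
  ⟨0, 1, ⟨((LinearEquiv.funUnique (Fin 1) (Polynomial k) (Mmod k 1)).symm).trans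
    (prodSubsingletonLeft _ _)⟩⟩

end Stmt14Aux

namespace Stmt14Aux

variable {k : Type} [Field k]

lemma res_mmod (p : ℕ) (hp2 : 2 ≤ p) (f : ℕ → ℕ) (hf : IsSizeFun p f) :
    ∀ N c, f c ≤ N → 1 ≤ c → c ≤ p → HasPermRes k p (f c) (Mmod k c) := by
  intro N
  induction N with
  | zero =>
    intro c hfc hc1 hcp
    have hc : c = 1 ∨ c = p := by
      by_contra hcon
      push_neg at hcon
      have := hf.2.2 c (by omega) (by omega)
      omega
    have hfc0 : f c = 0 := by omega
    rw [hfc0]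
    rcases hc with rfl | rfl
    · exact (hasPermRes_zero_iff _).mpr isPermMod_mmod_one
    · exact (hasPermRes_zero_iff _).mpr isPermMod_mmod_p
  | succ N ih =>
    intro c hfc hc1 hcp
    by_cases hc : c = 1 ∨ c = p
    · have hfc0 : f c = 0 := by
        rcases hc with rfl | rfl
        · exact hf.1
        · exact hf.2.1
      rw [hfc0]
      rcases hc with rfl | rfl
      · exact (hasPermRes_zero_iff _).mpr isPermMod_mmod_one
      · exact (hasPermRes_zero_iff _).mpr isPermMod_mmod_p
    · push_neg at hc
      have heq := hf.2.2 c (by omega) (by omega)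
      by_cases hmin : f (p - c) ≤ f (p - c + 1)
      · have hm : min (f (p - c)) (f (p - c + 1)) = f (p - c) := min_eq_left hmin
        have hstep : f c = f (p - c) + 1 := by rw [heq, hm]
        rw [hstep]
        refine (hasPermRes_succ_iff _ _).mpr ⟨Mmod k p, inferInstance, inferInstance,
          projQ p c (by omega), isPermMod_mmod_p, projQ_surjective _ _ _, ?_⟩
        exact hasPermRes_congr _ _ _ (kerProjEquiv p c (by omega))
          (ih (p - c) (by omega) (by omega) (by omega))
      · have hm : min (f (p - c)) (f (p - c + 1)) = f (p - c + 1) :=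
          min_eq_right (le_of_lt (not_le.mp hmin))
        have hstep : f c = f (p - c + 1) + 1 := by rw [heq, hm]
        rw [hstep]
        refine (hasPermRes_succ_iff _ _).mpr ⟨Mmod k p × Mmod k 1, inferInstance, inferInstance,
          Fmap c (by omega) (by omega), isPermMod_prod isPermMod_mmod_p isPermMod_mmod_one,
          Fmap_surjective _ _ _, ?_⟩
        exact hasPermRes_congr _ _ _ (kerFEquiv c (by omega) (by omega))
          (ih (p - c + 1) (by omega) (by omega) (by omega))

lemma upper (p : ℕ) (hp2 : 2 ≤ p) (f : ℕ → ℕ) (hf : IsSizeFun p f)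
    (n : ℕ) (c : Fin n → ℕ) (hc : ∀ i, 1 ≤ c i ∧ c i ≤ p) :
    HasPermRes k p (Finset.univ.sup fun i => f (c i)) (∀ i : Fin n, Mmod k (c i)) :=
  hasPermRes_pi _ n _ fun i => hasPermRes_mono (Finset.le_sup (Finset.mem_univ i)) _
    (res_mmod p hp2 f hf (f (c i)) (c i) le_rfl (hc i).1 (hc i).2)

end Stmt14Aux

namespace Stmt14Aux

variable {k : Type} [Field k] {p : ℕ}

lemma mmod_one_smul (y : Mmod k 1) : (X : Polynomial k) • y = 0 := by
  obtain ⟨g, rfl⟩ := Submodule.Quotient.mk_surjective _ y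
  rw [smul_mk, mk_eq_zero', pow_one]
  exact Dvd.intro g rfl

lemma permMod_ann {P : Type} [AddCommGroup P] [Module (Polynomial k) P]
    (hperm : IsPermMod k p P) (hp1 : 1 ≤ p) (z : P) : (X : Polynomial k) ^ p • z = 0 := by
  obtain ⟨r, s, ⟨g⟩⟩ := hperm
  apply g.injective
  rw [map_smul, map_zero]
  refine Prod.ext ?_ ?_
  · funext i
    simp only [Prod.smul_fst, Pi.smul_apply, Prod.fst_zero, Pi.zero_apply]
    exact mmod_ann p p le_rfl _
  · funext j
    simp only [Prod.smul_snd, Pi.smul_apply, Prod.snd_zero, Pi.zero_apply]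
    exact mmod_ann 1 p hp1 _

lemma perm_decomp {P : Type} [AddCommGroup P] [Module (Polynomial k) P]
    (hperm : IsPermMod k p P) (c' : ℕ) (h1 : 1 ≤ c') (h2 : c' ≤ p - 1) (hp2 : 2 ≤ p)
    (x w : P) (hxw : (X : Polynomial k) ^ (p - 1) • x = (X : Polynomial k) ^ (p - c') • w) :
    ∃ a b ξ xh u : P,
      x = a + (X : Polynomial k) • xh + u ∧
      w = (X : Polynomial k) ^ (c' - 1) • a + (X : Polynomial k) ^ c' • b + ξ ∧
      (X : Polynomial k) • u = 0 ∧ (X : Polynomial k) • ξ = 0 := by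
  obtain ⟨r, s, ⟨g⟩⟩ := hperm
  set x' := g x with hx'
  set w' := g w with hw'
  have hxw' : (X : Polynomial k) ^ (p - 1) • x' = (X : Polynomial k) ^ (p - c') • w' := by
    rw [hx', hw', ← map_smul, ← map_smul, hxw]
  have hrep : ∀ i : Fin r, ∃ gg : Polynomial k, Submodule.Quotient.mk gg = x'.1 i :=
    fun i => Submodule.Quotient.mk_surjective _ _
  choose gg hgg using hrep
  set A1 : Fin r → Mmod k p := fun i => Submodule.Quotient.mk (C ((gg i).coeff 0)) with hA1
  set XH1 : Fin r → Mmod k p := fun i => Submodule.Quotient.mk ((gg i).divX) with hXH1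
  have hxdec1 : ∀ i, x'.1 i = A1 i + (X : Polynomial k) • XH1 i := by
    intro i
    rw [hA1, hXH1, ← hgg i]
    simp only []
    rw [smul_mk, ← Submodule.Quotient.mk_add]
    congr 1
    conv_lhs => rw [← Polynomial.divX_mul_X_add (gg i)]
    ring
  have hcomp : ∀ i : Fin r,
      (X : Polynomial k) ^ (p - c') •
        (w'.1 i - (X : Polynomial k) ^ (c' - 1) • A1 i) = 0 := by
    intro i
    have h3 := congrFun (congrArg Prod.fst hxw') i
    simp only [Prod.smul_fst, Pi.smul_apply] at h3
    have e1 : (X : Polynomial k) ^ (p - 1) • ((X : Polynomial k) • XH1 i) = 0 := by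
      rw [smul_smul, ← pow_succ]
      have hpp : p - 1 + 1 = p := by omega
      rw [hpp]
      exact mmod_ann p p le_rfl _
    have e2 : (X : Polynomial k) ^ (p - c') • ((X : Polynomial k) ^ (c' - 1) • A1 i)
        = (X : Polynomial k) ^ (p - 1) • A1 i := by
      rw [smul_smul, ← pow_add]
      congr 2
      omega
    rw [smul_sub, e2, ← h3, hxdec1 i, smul_add, e1, add_zero, sub_self]
  have hB : ∀ i : Fin r, ∃ v : Mmod k p,
      w'.1 i - (X : Polynomial k) ^ (c' - 1) • A1 i = (X : Polynomial k) ^ c' • v := by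
    intro i
    obtain ⟨v, hv⟩ := mmod_exists p (p - c') (by omega) _ (hcomp i)
    have hee : p - (p - c') = c' := by omega
    rw [hee] at hv
    exact ⟨v, hv⟩
  choose v hv using hB
  refine ⟨g.symm (A1, 0), g.symm (v, 0), g.symm (0, w'.2), g.symm (XH1, 0), g.symm (0, x'.2),
    ?_, ?_, ?_, ?_⟩
  · apply g.injective
    simp only [map_add, map_smul, LinearEquiv.apply_symm_apply]
    rw [← hx']
    refine Prod.ext ?_ ?_
    · funext i
      simp only [Prod.fst_add, Prod.smul_fst, Pi.add_apply, Pi.smul_apply, Pi.zero_apply,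
        Prod.fst_zero, smul_zero, add_zero]
      exact hxdec1 i
    · funext j
      simp only [Prod.snd_add, Prod.smul_snd, Pi.add_apply, Pi.smul_apply, Pi.zero_apply,
        Prod.snd_zero, smul_zero, zero_add]
  · apply g.injective
    simp only [map_add, map_smul, LinearEquiv.apply_symm_apply]
    rw [← hw']
    refine Prod.ext ?_ ?_
    · funext i
      simp only [Prod.fst_add, Prod.smul_fst, Pi.add_apply, Pi.smul_apply, Pi.zero_apply,
        Prod.fst_zero, smul_zero, add_zero]
      have := sub_eq_iff_eq_add.mp (hv i)
      rw [this]
      abel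
    · funext j
      simp only [Prod.snd_add, Prod.smul_snd, Pi.add_apply, Pi.smul_apply, Pi.zero_apply,
        Prod.snd_zero, smul_zero, zero_add]
  · rw [← map_smul]
    have hz : (X : Polynomial k) • ((0, x'.2) : (Fin r → Mmod k p) × (Fin s → Mmod k 1)) = 0 := by
      refine Prod.ext ?_ ?_
      · simp
      · funext j
        simp only [Prod.smul_snd, Pi.smul_apply, Prod.snd_zero, Pi.zero_apply]
        exact mmod_one_smul _
    rw [hz, map_zero]
  · rw [← map_smul]
    have hz : (X : Polynomial k) • ((0, w'.2) : (Fin r → Mmod k p) × (Fin s → Mmod k 1)) = 0 := by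
      refine Prod.ext ?_ ?_
      · simp
      · funext j
        simp only [Prod.smul_snd, Pi.smul_apply, Prod.snd_zero, Pi.zero_apply]
        exact mmod_one_smul _
    rw [hz, map_zero]

end Stmt14Aux

namespace Stmt14Aux

variable {k : Type} [Field k] {p : ℕ}

lemma lemA {N P : Type} [AddCommGroup N] [Module (Polynomial k) N]
    [AddCommGroup P] [Module (Polynomial k) P]
    (hp2 : 2 ≤ p)
    (π : P →ₗ[Polynomial k] N) (hsurj : Function.Surjective π) (hperm : IsPermMod k p P)
    (c : ℕ) (hc1 : 2 ≤ c) (hc2 : c ≤ p - 1)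
    (m : N) (hm0 : (X : Polynomial k) ^ c • m = 0)
    (hm1 : ¬ ∃ z : N, (X : Polynomial k) ^ (c - 1) • m = (X : Polynomial k) ^ c • z) :
    ∃ d, (d = p - c ∨ d = p - c + 1) ∧
      ∃ y : ↥(LinearMap.ker π), (X : Polynomial k) ^ d • y = 0 ∧
        ¬ ∃ z : ↥(LinearMap.ker π),
          (X : Polynomial k) ^ (d - 1) • y = (X : Polynomial k) ^ d • z := by
  obtain ⟨x, hx⟩ := hsurj m
  by_cases h₁ : ∃ w : ↥(LinearMap.ker π),
      (X : Polynomial k) ^ (p - c) • (w : P) = (X : Polynomial k) ^ (p - 1) • x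
  · by_cases h₂ : ∃ w : ↥(LinearMap.ker π),
        (X : Polynomial k) ^ (p - c + 1) • (w : P) = (X : Polynomial k) ^ (p - 1) • x
    · -- case 2b : contradiction
      exfalso
      obtain ⟨w, hw⟩ := h₂
      have hxw : (X : Polynomial k) ^ (p - 1) • x
          = (X : Polynomial k) ^ (p - (c - 1)) • (w : P) := by
        rw [← hw]
        congr 2
        omega
      obtain ⟨a, b, ξ, xh, u, hxdec, hwdec, hu, hξ⟩ :=
        perm_decomp hperm (c - 1) (by omega) (by omega) hp2 x (w : P) hxw
      have hπw : π (w : P) = 0 := w.2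
      have e1 : (X : Polynomial k) ^ (c - 1 - 1) • π a
          + (X : Polynomial k) ^ (c - 1) • π b + π ξ = 0 := by
        have h4 := congrArg π hwdec
        simp only [map_add, map_smul] at h4
        rw [hπw] at h4
        exact h4.symm
      have e2 : (X : Polynomial k) ^ (c - 1) • π a + (X : Polynomial k) ^ c • π b = 0 := by
        have h5 := congrArg (fun t => (X : Polynomial k) • t) e1
        simp only [smul_add, smul_zero] at h5
        rw [smul_smul, smul_smul, ← pow_succ', ← pow_succ'] at h5
        have ha : c - 1 - 1 + 1 = c - 1 := by omega
        have hb : c - 1 + 1 = c := by omega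
        rw [show (X:Polynomial k)^(c-1-1+1) = X^(c-1) by rw [ha],
          show (X:Polynomial k)^(c-1+1) = X^c by rw [hb]] at h5
        have h9 : (X : Polynomial k) • π ξ = 0 := by rw [← map_smul, hξ, map_zero]
        rw [h9, add_zero] at h5
        exact h5
      apply hm1
      refine ⟨π xh - π b, ?_⟩
      have hma : m = π a + (X : Polynomial k) • π xh + π u := by
        rw [← hx]
        conv_lhs => rw [hxdec]
        simp only [map_add, map_smul]
      have hu0 : (X : Polynomial k) ^ (c - 1) • π u = 0 := by
        have h6 : (X : Polynomial k) ^ (c - 1) • u = 0 := by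
          have h7 : (X : Polynomial k) ^ (c - 1) = X ^ (c - 2) * X := by
            rw [← pow_succ]
            congr 1
            omega
          rw [h7, mul_smul, hu, smul_zero]
        rw [← map_smul, h6, map_zero]
      have e3 : (X : Polynomial k) ^ (c - 1) • ((X : Polynomial k) • π xh)
          = (X : Polynomial k) ^ c • π xh := by
        rw [smul_smul, ← pow_succ]
        congr 2
        omega
      have e4 : (X : Polynomial k) ^ (c - 1) • π a = -((X : Polynomial k) ^ c • π b) :=
        eq_neg_of_add_eq_zero_left e2
      rw [hma, smul_add, smul_add, hu0, add_zero, e3, e4, smul_sub]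
      abel
    · -- case 2a : d = p - c + 1
      obtain ⟨w, hw⟩ := h₁
      have hxw : (X : Polynomial k) ^ (p - 1) • x
          = (X : Polynomial k) ^ (p - c) • (w : P) := hw.symm
      obtain ⟨a, b, ξ, xh, u, hxdec, hwdec, hu, hξ⟩ :=
        perm_decomp hperm c (by omega) hc2 hp2 x (w : P) hxw
      have hπw : π (w : P) = 0 := w.2
      have e1 : (X : Polynomial k) ^ (c - 1) • π a
          + (X : Polynomial k) ^ c • π b + π ξ = 0 := by
        have h4 := congrArg π hwdec
        simp only [map_add, map_smul] at h4
        rw [hπw] at h4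
        exact h4.symm
      set y' : P := (X : Polynomial k) ^ (c - 1) • x - (X : Polynomial k) ^ c • (xh - b) + ξ
        with hy'def
      have hu0 : (X : Polynomial k) ^ (c - 1) • π u = 0 := by
        have h6 : (X : Polynomial k) ^ (c - 1) • u = 0 := by
          have h7 : (X : Polynomial k) ^ (c - 1) = X ^ (c - 2) * X := by
            rw [← pow_succ]
            congr 1
            omega
          rw [h7, mul_smul, hu, smul_zero]
        rw [← map_smul, h6, map_zero]
      have e3 : (X : Polynomial k) ^ (c - 1) • ((X : Polynomial k) • π xh)
          = (X : Polynomial k) ^ c • π xh := by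
        rw [smul_smul, ← pow_succ]
        congr 2
        omega
      have hma : π x = π a + (X : Polynomial k) • π xh + π u := by
        conv_lhs => rw [hxdec]
        simp only [map_add, map_smul]
      have hy' : π y' = 0 := by
        rw [hy'def]
        simp only [map_add, map_sub, map_smul]
        rw [hma, smul_add, smul_add, hu0, add_zero, e3, smul_sub]
        rw [← e1]
        abel
      refine ⟨p - c + 1, Or.inr rfl, ⟨⟨y', hy'⟩, ?_, ?_⟩⟩
      · apply Subtype.ext
        show (X : Polynomial k) ^ (p - c + 1) • y' = 0
        rw [hy'def, smul_add, smul_sub]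
        have t1 : (X : Polynomial k) ^ (p - c + 1) • ((X : Polynomial k) ^ (c - 1) • x) = 0 := by
          rw [smul_smul, ← pow_add]
          have : p - c + 1 + (c - 1) = p := by omega
          rw [this]
          exact permMod_ann hperm (by omega) x
        have t2 : (X : Polynomial k) ^ (p - c + 1) • ((X : Polynomial k) ^ c • (xh - b)) = 0 := by
          rw [smul_smul, ← pow_add]
          have : p - c + 1 + c = p + 1 := by omega
          rw [this, pow_succ', mul_smul, permMod_ann hperm (by omega), smul_zero]
        have t3 : (X : Polynomial k) ^ (p - c + 1) • ξ = 0 := by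
          have : (X : Polynomial k) ^ (p - c + 1) = X ^ (p - c) * X := by rw [← pow_succ]
          rw [this, mul_smul, hξ, smul_zero]
        rw [t1, t2, t3, sub_zero, add_zero]
      · rintro ⟨z, hz⟩
        apply h₂
        refine ⟨z, ?_⟩
        have hz' := congrArg Subtype.val hz
        simp only [SetLike.val_smul] at hz'
        have hee : p - c + 1 - 1 = p - c := by omega
        rw [hee] at hz'
        have hred : (X : Polynomial k) ^ (p - c) • y' = (X : Polynomial k) ^ (p - 1) • x := by
          rw [hy'def, smul_add, smul_sub]
          have t1 : (X : Polynomial k) ^ (p - c) • ((X : Polynomial k) ^ (c - 1) • x)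
              = (X : Polynomial k) ^ (p - 1) • x := by
            rw [smul_smul, ← pow_add]
            congr 2
            omega
          have t2 : (X : Polynomial k) ^ (p - c) • ((X : Polynomial k) ^ c • (xh - b)) = 0 := by
            rw [smul_smul, ← pow_add]
            have : p - c + c = p := by omega
            rw [this]
            exact permMod_ann hperm (by omega) _
          have t3 : (X : Polynomial k) ^ (p - c) • ξ = 0 := by
            have h8 : (X : Polynomial k) ^ (p - c) = X ^ (p - c - 1) * X := by
              rw [← pow_succ]
              congr 1
              omega
            rw [h8, mul_smul, hξ, smul_zero]
          rw [t1, t2, t3, sub_zero, add_zero]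
        rw [hred] at hz'
        exact hz'.symm
  · -- case 1 : d = p - c
    have hker : (X : Polynomial k) ^ c • x ∈ LinearMap.ker π := by
      rw [LinearMap.mem_ker, map_smul, hx, hm0]
    refine ⟨p - c, Or.inl rfl, ⟨⟨(X : Polynomial k) ^ c • x, hker⟩, ?_, ?_⟩⟩
    · apply Subtype.ext
      show (X : Polynomial k) ^ (p - c) • ((X : Polynomial k) ^ c • x) = 0
      rw [smul_smul, ← pow_add]
      have : p - c + c = p := by omega
      rw [this]
      exact permMod_ann hperm (by omega) x
    · rintro ⟨z, hz⟩
      apply h₁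
      refine ⟨z, ?_⟩
      have hz' := congrArg Subtype.val hz
      simp only [SetLike.val_smul] at hz'
      rw [smul_smul, ← pow_add] at hz'
      have : p - c - 1 + c = p - 1 := by omega
      rw [this] at hz'
      exact hz'.symm

end Stmt14Aux

namespace Stmt14Aux

variable {k : Type} [Field k] {p : ℕ}

lemma lower (hp2 : 2 ≤ p) (f : ℕ → ℕ) (hf : IsSizeFun p f) :
    ∀ (s : ℕ) (N : Type) [AddCommGroup N] [Module (Polynomial k) N],
      HasPermRes k p s N → ∀ t, 2 ≤ t → t ≤ p - 1 →
      (∃ m : N, (X : Polynomial k) ^ t • m = 0 ∧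
        ¬ ∃ z : N, (X : Polynomial k) ^ (t - 1) • m = (X : Polynomial k) ^ t • z) →
      f t ≤ s := by
  intro s
  induction s with
  | zero =>
    intro N _ _ hres t ht1 ht2 hcert
    exfalso
    obtain ⟨m, hm0, hm1⟩ := hcert
    obtain ⟨r, s', ⟨g⟩⟩ := (hasPermRes_zero_iff N).mp hres
    apply hm1
    set y := g m with hy
    have hy0 : (X : Polynomial k) ^ t • y = 0 := by rw [hy, ← map_smul, hm0, map_zero]
    have hcomp : ∀ i : Fin r, ∃ v : Mmod k p, y.1 i = (X : Polynomial k) ^ (p - t) • v := by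
      intro i
      apply mmod_exists p t (by omega)
      have := congrFun (congrArg Prod.fst hy0) i
      simpa using this
    choose v hv using hcomp
    refine ⟨g.symm ((fun i => (X : Polynomial k) ^ (p - 1 - t) • v i), 0), ?_⟩
    apply g.injective
    rw [map_smul, map_smul, LinearEquiv.apply_symm_apply, ← hy]
    refine Prod.ext ?_ ?_
    · funext i
      simp only [Prod.smul_fst, Pi.smul_apply]
      rw [hv i, smul_smul, smul_smul, ← pow_add, ← pow_add]
      congr 2
      omega
    · funext j
      simp only [Prod.smul_snd, Pi.smul_apply, Prod.snd_zero, Pi.zero_apply, smul_zero]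
      exact mmod_ann 1 (t - 1) (by omega) _
  | succ s ih =>
    intro N _ _ hres t ht1 ht2 hcert
    obtain ⟨P, iP1, iP2, π, hperm, hsurj, hresK⟩ := (hasPermRes_succ_iff s N).mp hres
    obtain ⟨m, hm0, hm1⟩ := hcert
    obtain ⟨d, hd, y, hy0, hy1⟩ := lemA hp2 π hsurj hperm t ht1 ht2 m hm0 hm1
    have heq := hf.2.2 t ht1 ht2
    rcases hd with rfl | rfl
    · by_cases hd2 : 2 ≤ p - t
      · have hfd : f (p - t) ≤ s :=
          ih (↥(LinearMap.ker π)) hresK (p - t) hd2 (by omega) ⟨y, hy0, hy1⟩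
        omega
      · have h1t : p - t = 1 := by omega
        have hf1 : f (p - t) = 0 := by rw [h1t]; exact hf.1
        omega
    · have hfd : f (p - t + 1) ≤ s :=
        ih (↥(LinearMap.ker π)) hresK (p - t + 1) (by omega) (by omega) ⟨y, hy0, hy1⟩
      omega

lemma cert_of_equiv {M : Type} [AddCommGroup M] [Module (Polynomial k) M]
    {n : ℕ} {c : Fin n → ℕ} (e : M ≃ₗ[Polynomial k] ((i : Fin n) → Mmod k (c i)))
    (i₀ : Fin n) (h1 : 1 ≤ c i₀) :
    ∃ m : M, (X : Polynomial k) ^ (c i₀) • m = 0 ∧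
      ¬ ∃ z : M, (X : Polynomial k) ^ (c i₀ - 1) • m = (X : Polynomial k) ^ (c i₀) • z := by
  classical
  refine ⟨e.symm ((Pi.single i₀ (Submodule.Quotient.mk 1) : ∀ i, Mmod k (c i))), ?_, ?_⟩
  · rw [← map_smul]
    have hsingle : (X : Polynomial k) ^ (c i₀) •
        (Pi.single i₀ (Submodule.Quotient.mk 1) : ∀ i, Mmod k (c i)) = (0 : ∀ i, Mmod k (c i)) := by
      rw [← Pi.single_smul]
      have h0 : (X : Polynomial k) ^ (c i₀) • (Submodule.Quotient.mk 1 : Mmod k (c i₀)) = 0 := by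
        rw [smul_mk, mk_eq_zero', mul_one]
      rw [h0, Pi.single_zero]
    rw [hsingle, map_zero]
  · rintro ⟨z, hz⟩
    have hz' := congrArg e hz
    rw [map_smul, map_smul, LinearEquiv.apply_symm_apply] at hz'
    have hz'' := congrFun hz' i₀
    rw [Pi.smul_apply, Pi.smul_apply, Pi.single_eq_same] at hz''
    exact mmod_ne (c i₀) h1 ⟨e z i₀, hz''⟩

end Stmt14Aux

/-- For every finitely generated `kC_p`-module `M`, `ppdim M = size M`, the maximum of
the `p`-distances of the invariants of `M`. -/
theorem stmt14 (k : Type) [Field k] (p : ℕ) (hp : p.Prime) [CharP k p]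
    (M : Type) [AddCommGroup M] [Module (Polynomial k) M] [Module.Finite (Polynomial k) M]
    (hann : ∀ m : M, (X : Polynomial k) ^ p • m = 0)
    (n : ℕ) (c : Fin n → ℕ) (hc : ∀ i, 1 ≤ c i ∧ c i ≤ p)
    (e : M ≃ₗ[Polynomial k] ((i : Fin n) → Mmod k (c i)))
    (f : ℕ → ℕ) (hf : IsSizeFun p f) :
    ppdim k p M = Finset.univ.sup (fun i => f (c i)) := by

  classical
  have hp2 : 2 ≤ p := hp.two_le
  set S := Finset.univ.sup (fun i => f (c i)) with hS
  have hupper : HasPermRes k p S M :=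
    Stmt14Aux.hasPermRes_congr S _ _ e.symm (Stmt14Aux.upper p hp2 f hf n c hc)
  have hlow : ∀ s, HasPermRes k p s M → S ≤ s := by
    intro s hs
    refine Finset.sup_le ?_
    intro i _
    by_cases hci : 2 ≤ c i ∧ c i ≤ p - 1
    · obtain ⟨m, hm0, hm1⟩ := Stmt14Aux.cert_of_equiv e i (hc i).1
      exact Stmt14Aux.lower hp2 f hf s M hs (c i) hci.1 hci.2 ⟨m, hm0, hm1⟩
    · have hone : c i = 1 ∨ c i = p := by have := hc i; omega
      rcases hone with h | h <;> rw [h]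
      · rw [hf.1]; omega
      · rw [hf.2.1]; omega
  have hmem : S ∈ {s | HasPermRes k p s M} := hupper
  have h1 : sInf {s | HasPermRes k p s M} ≤ S := Nat.sInf_le hmem
  have h2 : S ≤ sInf {s | HasPermRes k p s M} := hlow _ (Nat.sInf_mem ⟨S, hmem⟩)
  exact le_antisymm h1 h2
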